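/- Let m₂, m₃, m₅ ∈ ℂ satisfy m₂² + m₃·m₅ = 0. Then the quotient ring ℂ[u,v] / (u² − m₃·v, u·v + m₂·v, v² + m₅·v) has dimension 3 as a complex vector space. -/

import Mathlib

open MvPolynomial

/-- Auxiliary 3-dimensional algebra: `ℂ·1 ⊕ ℂ·u ⊕ ℂ·v` with
`u² = m₃ v`, `uv = -m₂ v`, `v² = -m₅ v`. -/
@[ext] structure MyAlg (m₂ m₃ m₅ : ℂ) : Type where
  x : ℂ
  y : ℂ
  z : ℂ

namespace MyAlg

variable {m₂ m₃ m₅ : ℂ}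

instance : Zero (MyAlg m₂ m₃ m₅) := ⟨⟨0, 0, 0⟩⟩
instance : One (MyAlg m₂ m₃ m₅) := ⟨⟨1, 0, 0⟩⟩
instance : Add (MyAlg m₂ m₃ m₅) := ⟨fun p q => ⟨p.x + q.x, p.y + q.y, p.z + q.z⟩⟩
instance : Neg (MyAlg m₂ m₃ m₅) := ⟨fun p => ⟨-p.x, -p.y, -p.z⟩⟩
instance : SMul ℂ (MyAlg m₂ m₃ m₅) := ⟨fun c p => ⟨c * p.x, c * p.y, c * p.z⟩⟩
instance : Mul (MyAlg m₂ m₃ m₅) :=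
  ⟨fun p q => ⟨p.x * q.x, p.x * q.y + p.y * q.x,
    p.x * q.z + p.z * q.x + m₃ * (p.y * q.y) - m₂ * (p.y * q.z + p.z * q.y)
      - m₅ * (p.z * q.z)⟩⟩

@[simp] lemma zero_x : (0 : MyAlg m₂ m₃ m₅).x = 0 := rfl
@[simp] lemma zero_y : (0 : MyAlg m₂ m₃ m₅).y = 0 := rfl
@[simp] lemma zero_z : (0 : MyAlg m₂ m₃ m₅).z = 0 := rfl
@[simp] lemma one_x : (1 : MyAlg m₂ m₃ m₅).x = 1 := rfl
@[simp] lemma one_y : (1 : MyAlg m₂ m₃ m₅).y = 0 := rfl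
@[simp] lemma one_z : (1 : MyAlg m₂ m₃ m₅).z = 0 := rfl
@[simp] lemma add_x (p q : MyAlg m₂ m₃ m₅) : (p + q).x = p.x + q.x := rfl
@[simp] lemma add_y (p q : MyAlg m₂ m₃ m₅) : (p + q).y = p.y + q.y := rfl
@[simp] lemma add_z (p q : MyAlg m₂ m₃ m₅) : (p + q).z = p.z + q.z := rfl
@[simp] lemma neg_x (p : MyAlg m₂ m₃ m₅) : (-p).x = -p.x := rfl
@[simp] lemma neg_y (p : MyAlg m₂ m₃ m₅) : (-p).y = -p.y := rfl
@[simp] lemma neg_z (p : MyAlg m₂ m₃ m₅) : (-p).z = -p.z := rfl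
@[simp] lemma smul_x (c : ℂ) (p : MyAlg m₂ m₃ m₅) : (c • p).x = c * p.x := rfl
@[simp] lemma smul_y (c : ℂ) (p : MyAlg m₂ m₃ m₅) : (c • p).y = c * p.y := rfl
@[simp] lemma smul_z (c : ℂ) (p : MyAlg m₂ m₃ m₅) : (c • p).z = c * p.z := rfl
@[simp] lemma mul_x (p q : MyAlg m₂ m₃ m₅) : (p * q).x = p.x * q.x := rfl
@[simp] lemma mul_y (p q : MyAlg m₂ m₃ m₅) : (p * q).y = p.x * q.y + p.y * q.x := rfl
@[simp] lemma mul_z (p q : MyAlg m₂ m₃ m₅) :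
    (p * q).z = p.x * q.z + p.z * q.x + m₃ * (p.y * q.y)
      - m₂ * (p.y * q.z + p.z * q.y) - m₅ * (p.z * q.z) := rfl

instance commRing [hf : Fact (m₂ ^ 2 + m₃ * m₅ = 0)] : CommRing (MyAlg m₂ m₃ m₅) where
  add_assoc p q r := by ext <;> simp <;> ring
  zero_add p := by ext <;> simp
  add_zero p := by ext <;> simp
  add_comm p q := by ext <;> simp <;> ring
  neg_add_cancel p := by ext <;> simp
  zero_mul p := by ext <;> simp
  mul_zero p := by ext <;> simp
  mul_assoc p q r := by
    have h := hf.out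
    ext <;> simp <;> ring_nf
    linear_combination (p.z * q.y * r.y - p.y * q.y * r.z) * h
  one_mul p := by ext <;> simp
  mul_one p := by ext <;> simp
  left_distrib p q r := by ext <;> simp <;> ring
  right_distrib p q r := by ext <;> simp <;> ring
  mul_comm p q := by ext <;> simp <;> ring
  nsmul n p := ⟨n * p.x, n * p.y, n * p.z⟩
  nsmul_zero p := by ext <;> (show ((0:ℕ):ℂ) * _ = _; simp)
  nsmul_succ n p := by ext <;> (show ((n+1:ℕ):ℂ) * _ = ((n:ℕ):ℂ) * _ + _; push_cast; ring)
  zsmul n p := ⟨n * p.x, n * p.y, n * p.z⟩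
  zsmul_zero' p := by ext <;> (show ((0:ℤ):ℂ) * _ = _; simp)
  zsmul_succ' n p := by
    ext <;> (show (((n.succ:ℕ):ℤ):ℂ) * _ = (((n:ℕ):ℤ):ℂ) * _ + _; push_cast; ring)
  zsmul_neg' n p := by
    ext <;> (show ((Int.negSucc n:ℤ):ℂ) * _ = -((((n.succ:ℕ):ℤ):ℂ) * _); rw [Int.cast_negSucc]; push_cast; ring)

/-- The structure map `ℂ → MyAlg`. -/
def cHom [Fact (m₂ ^ 2 + m₃ * m₅ = 0)] : ℂ →+* MyAlg m₂ m₃ m₅ where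
  toFun c := ⟨c, 0, 0⟩
  map_one' := by ext <;> simp
  map_mul' a b := by ext <;> simp
  map_zero' := by ext <;> simp
  map_add' a b := by ext <;> simp

instance algebra [Fact (m₂ ^ 2 + m₃ * m₅ = 0)] : Algebra ℂ (MyAlg m₂ m₃ m₅) where
  algebraMap := cHom
  commutes' c p := by ext <;> simp [cHom] <;> ring
  smul_def' c p := by ext <;> simp [cHom]

@[simp] lemma algebraMap_x [Fact (m₂ ^ 2 + m₃ * m₅ = 0)] (c : ℂ) :
    (algebraMap ℂ (MyAlg m₂ m₃ m₅) c).x = c := rfl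
@[simp] lemma algebraMap_y [Fact (m₂ ^ 2 + m₃ * m₅ = 0)] (c : ℂ) :
    (algebraMap ℂ (MyAlg m₂ m₃ m₅) c).y = 0 := rfl
@[simp] lemma algebraMap_z [Fact (m₂ ^ 2 + m₃ * m₅ = 0)] (c : ℂ) :
    (algebraMap ℂ (MyAlg m₂ m₃ m₅) c).z = 0 := rfl

/-- Linear equivalence with `Fin 3 → ℂ`. -/
noncomputable def equivPi [Fact (m₂ ^ 2 + m₃ * m₅ = 0)] :
    MyAlg m₂ m₃ m₅ ≃ₗ[ℂ] (Fin 3 → ℂ) where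
  toFun p := ![p.x, p.y, p.z]
  map_add' p q := by funext i; fin_cases i <;> simp
  map_smul' c p := by funext i; fin_cases i <;> simp
  invFun f := ⟨f 0, f 1, f 2⟩
  left_inv p := by ext <;> rfl
  right_inv f := by funext i; fin_cases i <;> rfl

lemma finrank_eq_three [Fact (m₂ ^ 2 + m₃ * m₅ = 0)] :
    Module.finrank ℂ (MyAlg m₂ m₃ m₅) = 3 := by
  rw [equivPi.finrank_eq]; simp

end MyAlg

set_option maxHeartbeats 1000000 in
/-- If `m₂² + m₃m₅ = 0`, then `ℂ[u,v] / (u² − m₃v, uv + m₂v, v² + m₅v)` (with `u = X 0`,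
`v = X 1`) has dimension `3` as a complex vector space. -/
theorem finrank_quotient_three_of_rel (m₂ m₃ m₅ : ℂ) (h : m₂ ^ 2 + m₃ * m₅ = 0) :
    Module.finrank ℂ
      (MvPolynomial (Fin 2) ℂ ⧸
        Ideal.span {(X 0 : MvPolynomial (Fin 2) ℂ) ^ 2 - C m₃ * X 1,
          X 0 * X 1 + C m₂ * X 1, X 1 ^ 2 + C m₅ * X 1}) = 3 := by
  haveI : Fact (m₂ ^ 2 + m₃ * m₅ = 0) := ⟨h⟩
  set I : Ideal (MvPolynomial (Fin 2) ℂ) :=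
    Ideal.span {(X 0 : MvPolynomial (Fin 2) ℂ) ^ 2 - C m₃ * X 1,
      X 0 * X 1 + C m₂ * X 1, X 1 ^ 2 + C m₅ * X 1} with hI
  set u : MvPolynomial (Fin 2) ℂ ⧸ I := Ideal.Quotient.mk I (X 0) with hu
  set v : MvPolynomial (Fin 2) ℂ ⧸ I := Ideal.Quotient.mk I (X 1) with hv
  have hC : ∀ (c : ℂ) (q : MvPolynomial (Fin 2) ℂ ⧸ I),
      Ideal.Quotient.mk I (C c) * q = c • q := by
    intro c q
    rw [← MvPolynomial.algebraMap_eq, Ideal.Quotient.mk_algebraMap, ← Algebra.smul_def]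
  -- relations in the quotient
  have hg1 : (X 0 : MvPolynomial (Fin 2) ℂ) ^ 2 - C m₃ * X 1 ∈ I :=
    Ideal.subset_span (by simp)
  have hg2 : (X 0 : MvPolynomial (Fin 2) ℂ) * X 1 + C m₂ * X 1 ∈ I :=
    Ideal.subset_span (by simp)
  have hg3 : (X 1 : MvPolynomial (Fin 2) ℂ) ^ 2 + C m₅ * X 1 ∈ I :=
    Ideal.subset_span (by simp)
  have huu : u * u = m₃ • v := by
    have h1 := Ideal.Quotient.eq_zero_iff_mem.mpr hg1
    rw [map_sub, sub_eq_zero, map_mul, map_pow] at h1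
    rw [hu, hv, ← sq, h1, hC]
  have huv : u * v = (-m₂) • v := by
    have h1 := Ideal.Quotient.eq_zero_iff_mem.mpr hg2
    rw [map_add, map_mul, map_mul, add_eq_zero_iff_eq_neg] at h1
    rw [hu, hv, h1, hC, neg_smul]
  have hvv : v * v = (-m₅) • v := by
    have h1 := Ideal.Quotient.eq_zero_iff_mem.mpr hg3
    rw [map_add, map_pow, map_mul, add_eq_zero_iff_eq_neg] at h1
    rw [hv, ← sq, h1, hC, neg_smul]
  -- the span of 1, u, v is everything
  have hspan : Submodule.span ℂ ({1, u, v} : Set (MvPolynomial (Fin 2) ℂ ⧸ I)) = ⊤ := by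
    rw [Submodule.eq_top_iff']
    intro q
    obtain ⟨p, rfl⟩ := Ideal.Quotient.mk_surjective q
    induction p using MvPolynomial.induction_on with
    | C a =>
        have h1 : Ideal.Quotient.mk I (C a) = a • (1 : MvPolynomial (Fin 2) ℂ ⧸ I) := by
          rw [← mul_one (Ideal.Quotient.mk I (C a)), hC]
        rw [h1]
        exact Submodule.smul_mem _ _ (Submodule.subset_span (by simp))
    | add p q hp hq => rw [map_add]; exact Submodule.add_mem _ hp hq
    | mul_X p i hp =>
        rw [map_mul]
        have key : ∀ s ∈ Submodule.span ℂ ({1, u, v} : Set (MvPolynomial (Fin 2) ℂ ⧸ I)),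
            s * Ideal.Quotient.mk I (X i) ∈
              Submodule.span ℂ ({1, u, v} : Set (MvPolynomial (Fin 2) ℂ ⧸ I)) := by
          intro s hs
          induction hs using Submodule.span_induction with
          | mem w hw =>
              have hXi : Ideal.Quotient.mk I (X i) = u ∨ Ideal.Quotient.mk I (X i) = v := by
                fin_cases i
                · exact Or.inl rfl
                · exact Or.inr rfl
              have hum : u ∈ Submodule.span ℂ ({1, u, v} : Set (MvPolynomial (Fin 2) ℂ ⧸ I)) :=
                Submodule.subset_span (by simp)
              have hvm : v ∈ Submodule.span ℂ ({1, u, v} : Set (MvPolynomial (Fin 2) ℂ ⧸ I)) :=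
                Submodule.subset_span (by simp)
              rcases hw with rfl | rfl | rfl <;> rcases hXi with hx | hx <;>
                rw [hx] <;>
                simp only [one_mul, mul_comm v u, huu, huv, hvv] <;>
                first
                  | exact hum
                  | exact hvm
                  | exact Submodule.smul_mem _ _ hvm
          | zero => simp
          | add a b _ _ ha hb => rw [add_mul]; exact Submodule.add_mem _ ha hb
          | smul c a _ ha => rw [smul_mul_assoc]; exact Submodule.smul_mem _ _ ha
        exact key _ hp
  -- finite dimensionality and upper bound
  haveI : Module.Finite ℂ (MvPolynomial (Fin 2) ℂ ⧸ I) :=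
    ⟨Submodule.fg_def.mpr ⟨{1, u, v},
      (Set.finite_singleton v).insert u |>.insert 1, hspan⟩⟩
  have hle : Module.finrank ℂ (MvPolynomial (Fin 2) ℂ ⧸ I) ≤ 3 := by
    have h1 : Submodule.span ℂ (Set.range ![(1 : MvPolynomial (Fin 2) ℂ ⧸ I), u, v]) = ⊤ := by
      have h2 : Set.range ![(1 : MvPolynomial (Fin 2) ℂ ⧸ I), u, v]
          = ({1, u, v} : Set (MvPolynomial (Fin 2) ℂ ⧸ I)) := by
        ext w; simp [Matrix.range_cons, Matrix.range_empty]; tauto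
      rw [h2, hspan]
    have h3 := finrank_range_le_card (R := ℂ) ![(1 : MvPolynomial (Fin 2) ℂ ⧸ I), u, v]
    rw [Set.finrank, h1, finrank_top] at h3
    simpa using h3
  -- surjection onto MyAlg gives the lower bound
  let φ : MvPolynomial (Fin 2) ℂ →ₐ[ℂ] MyAlg m₂ m₃ m₅ :=
    aeval ![(⟨0, 1, 0⟩ : MyAlg m₂ m₃ m₅), (⟨0, 0, 1⟩ : MyAlg m₂ m₃ m₅)]
  have hker : ∀ p ∈ I, φ p = 0 := by
    intro p hp
    rw [hI] at hp
    induction hp using Submodule.span_induction with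
    | zero => exact map_zero φ
    | add a b _ _ ha hb => rw [map_add, ha, hb, add_zero]
    | smul c a _ ha => rw [smul_eq_mul, map_mul, ha, mul_zero]
    | mem g hg =>
      rcases hg with rfl | rfl | rfl <;>
      · simp only [map_sub, map_add, map_mul, map_pow, aeval_X, aeval_C, φ]
        ext <;> simp [pow_two, sub_eq_add_neg] <;> try ring
  let ψ : (MvPolynomial (Fin 2) ℂ ⧸ I) →ₐ[ℂ] MyAlg m₂ m₃ m₅ :=
    Ideal.Quotient.liftₐ I φ hker
  have hψs : Function.Surjective ψ := by
    intro a
    refine ⟨Ideal.Quotient.mk I (C a.x + C a.y * X 0 + C a.z * X 1), ?_⟩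
    show φ (C a.x + C a.y * X 0 + C a.z * X 1) = a
    simp only [map_add, map_mul, aeval_X, aeval_C, φ]
    ext <;> simp
  have hge : 3 ≤ Module.finrank ℂ (MvPolynomial (Fin 2) ℂ ⧸ I) := by
    have h4 := LinearMap.finrank_range_le (ψ.toLinearMap)
    have h5 : LinearMap.range ψ.toLinearMap = ⊤ := LinearMap.range_eq_top.mpr hψs
    rwa [h5, finrank_top, MyAlg.finrank_eq_three] at h4
  omega
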